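/- ‖x_{n+1} − w_n‖ → 0 as n → ∞. -/

import Mathlib

open scoped RealInnerProductSpace
open Filter Topology

lemma aux_id1 {H : Type*} [NormedAddCommGroup H] [InnerProductSpace ℝ H]
    (u v : H) (t : ℝ) :
    ‖u + t • (u - v)‖ ^ 2 = (1 + t) * ‖u‖ ^ 2 - t * ‖v‖ ^ 2 + t * (1 + t) * ‖u - v‖ ^ 2 := by
  have h1 : ‖u + t • (u - v)‖ ^ 2
      = ‖u‖ ^ 2 + 2 * (t * ⟪u, u - v⟫) + t ^ 2 * ‖u - v‖ ^ 2 := by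
    rw [norm_add_sq_real, real_inner_smul_right, norm_smul, Real.norm_eq_abs, mul_pow, sq_abs]
  have h2 : ⟪u, u - v⟫ = ‖u‖ ^ 2 - ⟪u, v⟫ := by
    rw [inner_sub_right, real_inner_self_eq_norm_sq]
  have h3 : ‖u - v‖ ^ 2 = ‖u‖ ^ 2 - 2 * ⟪u, v⟫ + ‖v‖ ^ 2 := by
    rw [norm_sub_sq_real]
  rw [h1, h2]
  linear_combination (-t) * h3

lemma aux_id2 {H : Type*} [NormedAddCommGroup H] [InnerProductSpace ℝ H]
    (p q : H) (t : ℝ) (ht : 0 ≤ t) :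
    (1 - t) * ‖p‖ ^ 2 - t * (1 - t) * ‖q‖ ^ 2 ≤ ‖p - t • q‖ ^ 2 := by
  have h1 : ‖p - t • q‖ ^ 2
      = ‖p‖ ^ 2 - 2 * (t * ⟪p, q⟫) + t ^ 2 * ‖q‖ ^ 2 := by
    rw [norm_sub_sq_real, real_inner_smul_right, norm_smul, Real.norm_eq_abs, mul_pow, sq_abs]
  have hcs : ⟪p, q⟫ ≤ ‖p‖ * ‖q‖ := real_inner_le_norm p q
  nlinarith [mul_nonneg ht (sq_nonneg (‖p‖ - ‖q‖))]

/-- `‖x_{n+1} − w_n‖ → 0` as `n → ∞`. -/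
theorem statement2
    {H : Type*} [NormedAddCommGroup H] [InnerProductSpace ℝ H] [CompleteSpace H]
    (α : ℝ) (αseq : ℕ → ℝ)
    (hαnn : ∀ n, 0 ≤ αseq n)
    (hαmono : ∀ n, αseq n ≤ αseq (n + 1))
    (hαle : ∀ n, αseq n ≤ α) (hα : α < 1 / 3)
    (x w : ℕ → H) (hx01 : x 0 = x 1)
    (hw : ∀ n, 1 ≤ n → w n = x n + αseq n • (x n - x (n - 1)))
    (hstar : ∃ xs : H, ∀ n, 1 ≤ n →
      ‖x (n + 1) - xs‖ ^ 2 ≤ ‖w n - xs‖ ^ 2 - ‖x (n + 1) - w n‖ ^ 2) :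
    Tendsto (fun n => ‖x (n + 1) - w n‖) atTop (nhds 0) := by
  obtain ⟨xs, hstar⟩ := hstar
  have hα0 : 0 ≤ α := le_trans (hαnn 0) (hαle 0)
  have h13 : 0 < 1 - 3 * α := by linarith
  set a : ℕ → ℝ := fun n => ‖x n - xs‖ ^ 2 with ha
  set D : ℕ → ℝ := fun n => ‖x n - x (n - 1)‖ ^ 2 with hD
  set Γ : ℕ → ℝ := fun n => a n - αseq n * a (n - 1) + 2 * α * D n with hΓ
  have haNN : ∀ n, 0 ≤ a n := fun n => sq_nonneg _
  have hDNN : ∀ n, 0 ≤ D n := fun n => sq_nonneg _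
  have hD1 : D 1 = 0 := by simp [hD, hx01]
  have ha01 : a 0 = a 1 := by simp [ha, hx01]
  -- decomposition of x (n+1) - w n
  have hxw : ∀ n, 1 ≤ n →
      x (n + 1) - w n = (x (n + 1) - x n) - αseq n • (x n - x (n - 1)) := by
    intro n hn
    rw [hw n hn]; abel
  -- main recursion
  have hmain : ∀ n, 1 ≤ n →
      a (n + 1) ≤ (1 + αseq n) * a n - αseq n * a (n - 1)
        + 2 * αseq n * D n - (1 - αseq n) * D (n + 1) := by
    intro n hn
    have hWeq : ‖w n - xs‖ ^ 2
        = (1 + αseq n) * a n - αseq n * a (n - 1) + αseq n * (1 + αseq n) * D n := by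
      have hw' : w n - xs = (x n - xs) + αseq n • ((x n - xs) - (x (n - 1) - xs)) := by
        have e : (x n - xs) - (x (n - 1) - xs) = x n - x (n - 1) := by abel
        rw [e, hw n hn]; abel
      rw [hw', aux_id1]
      have e : (x n - xs) - (x (n - 1) - xs) = x n - x (n - 1) := by abel
      rw [e]
    have hSge : (1 - αseq n) * D (n + 1) - αseq n * (1 - αseq n) * D n
        ≤ ‖x (n + 1) - w n‖ ^ 2 := by
      rw [hxw n hn]
      have h := aux_id2 (x (n + 1) - x n) (x n - x (n - 1)) (αseq n) (hαnn n)
      have eD : D (n + 1) = ‖x (n + 1) - x n‖ ^ 2 := by simp [hD]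
      rw [eD]
      exact h
    have hst := hstar n hn
    have ea : a (n + 1) = ‖x (n + 1) - xs‖ ^ 2 := rfl
    linarith [hst, hSge, hWeq.le, hWeq.ge]
  -- key: Γ decreases
  have hkey : ∀ n, 1 ≤ n → Γ (n + 1) ≤ Γ n - (1 - 3 * α) * D (n + 1) := by
    intro n hn
    have h1 := hmain n hn
    have h2 := hαmono n
    have h3 := hαle n
    have h4 := hDNN n
    have h5 := hDNN (n + 1)
    have h6 := haNN n
    have h7 := hαnn n
    have e1 : Γ (n + 1) = a (n + 1) - αseq (n + 1) * a n + 2 * α * D (n + 1) := rfl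
    have e2 : Γ n = a n - αseq n * a (n - 1) + 2 * α * D n := rfl
    rw [e1, e2]
    nlinarith [mul_nonneg (sub_nonneg.2 h2) h6, mul_nonneg (sub_nonneg.2 h3) h4,
      mul_nonneg (sub_nonneg.2 h3) h5]
  have hGam : ∀ n, 1 ≤ n → Γ n ≤ Γ 1 := by
    intro n hn
    induction n with
    | zero => omega
    | succ n ih =>
      rcases Nat.lt_or_ge n 1 with h | h
      · interval_cases n
        · exact le_refl _
      · have := hkey n h
        have := ih h
        nlinarith [mul_nonneg h13.le (hDNN (n + 1))]
  have hΓ1 : Γ 1 ≤ a 1 := by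
    have e : Γ 1 = a 1 - αseq 1 * a 0 + 2 * α * D 1 := rfl
    rw [e, hD1]
    nlinarith [mul_nonneg (hαnn 1) (haNN 0)]
  set M : ℝ := a 1 / (1 - α) with hM
  have h1α : 0 < 1 - α := by linarith
  have hMeq : M * (1 - α) = a 1 := by
    rw [hM]; field_simp
  have ha1M : a 1 ≤ M := by nlinarith [mul_nonneg hα0 (haNN 1)]
  have hbound : ∀ n, a n ≤ M := by
    intro n
    induction n with
    | zero => rw [ha01]; exact ha1M
    | succ n ih =>
      have hg := le_trans (hGam (n + 1) (Nat.le_add_left 1 n)) hΓ1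
      have e1 : Γ (n + 1) = a (n + 1) - αseq (n + 1) * a n + 2 * α * D (n + 1) := rfl
      rw [e1] at hg
      nlinarith [mul_nonneg hα0 (hDNN (n + 1)),
        mul_nonneg (sub_nonneg.2 (hαle (n + 1))) (haNN n),
        mul_nonneg hα0 (sub_nonneg.2 ih)]
  have hGlb : ∀ n, 1 ≤ n → -(α * M) ≤ Γ n := by
    intro n hn
    have e : Γ n = a n - αseq n * a (n - 1) + 2 * α * D n := rfl
    rw [e]
    nlinarith [haNN n, mul_nonneg hα0 (hDNN n),
      mul_nonneg (sub_nonneg.2 (hαle n)) (haNN (n - 1)),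
      mul_nonneg hα0 (sub_nonneg.2 (hbound (n - 1)))]
  -- telescoping
  have tele : ∀ N, Γ (N + 1) + (1 - 3 * α) * ∑ k ∈ Finset.range N, D (k + 2) ≤ Γ 1 := by
    intro N
    induction N with
    | zero => simp
    | succ N ih =>
      rw [Finset.sum_range_succ, mul_add]
      have hk := hkey (N + 1) (Nat.le_add_left 1 N)
      have e : N + 1 + 1 = N + 2 := rfl
      linarith
  have sumbound : ∀ N, ∑ k ∈ Finset.range N, D (k + 2) ≤ (a 1 + α * M) / (1 - 3 * α) := by
    intro N
    rw [le_div_iff₀ h13]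
    have h1 := tele N
    have h2 := hGlb (N + 1) (Nat.le_add_left 1 N)
    nlinarith
  have hs : Summable (fun k => D (k + 2)) :=
    summable_of_sum_range_le (fun k => hDNN _) sumbound
  have h0 : Tendsto (fun k => D (k + 2)) atTop (𝓝 0) := hs.tendsto_atTop_zero
  have hDt : Tendsto D atTop (𝓝 0) := (tendsto_add_atTop_iff_nat 2).mp h0
  have hsq : Tendsto (fun n => ‖x n - x (n - 1)‖) atTop (𝓝 0) := by
    have he : (fun n => ‖x n - x (n - 1)‖) = fun n => Real.sqrt (D n) := by
      funext n; rw [hD]; exact (Real.sqrt_sq (norm_nonneg _)).symm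
    rw [he]
    have := (Real.continuous_sqrt.tendsto 0).comp hDt
    simpa [Function.comp_def] using this
  have hsq1 : Tendsto (fun n => ‖x (n + 1) - x n‖) atTop (𝓝 0) := by
    have := (tendsto_add_atTop_iff_nat 1).mpr hsq
    simpa using this
  have hb : ∀ n, 1 ≤ n →
      ‖x (n + 1) - w n‖ ≤ ‖x (n + 1) - x n‖ + α * ‖x n - x (n - 1)‖ := by
    intro n hn
    rw [hxw n hn]
    calc ‖(x (n + 1) - x n) - αseq n • (x n - x (n - 1))‖
        ≤ ‖x (n + 1) - x n‖ + ‖αseq n • (x n - x (n - 1))‖ := norm_sub_le _ _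
      _ = ‖x (n + 1) - x n‖ + αseq n * ‖x n - x (n - 1)‖ := by
          rw [norm_smul, Real.norm_eq_abs, abs_of_nonneg (hαnn n)]
      _ ≤ ‖x (n + 1) - x n‖ + α * ‖x n - x (n - 1)‖ := by
          have := mul_le_mul_of_nonneg_right (hαle n) (norm_nonneg (x n - x (n - 1)))
          linarith
  have hg0 : Tendsto (fun n => ‖x (n + 1) - x n‖ + α * ‖x n - x (n - 1)‖) atTop (𝓝 0) := by
    have := hsq1.add (hsq.const_mul α)
    simpa using this
  refine squeeze_zero' ?_ ?_ hg0
  · filter_upwards with n using norm_nonneg _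
  · filter_upwards [eventually_ge_atTop 1] with n hn using hb n hn
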